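/- Let α > -1/2 and a ≥ 1. There exists a constant C, depending only on α (in particular, independent of j), such that for every integer j ≥ 1, every ξ ∈ (0,1) and all x, y > 0 one has G_{α+aj,t(ξ)}(x,y) ≤ C ((1−ξ²)/ξ)^{1/2} (xy)^{−aj−α−1/2}. -/

import Mathlib

set_option maxHeartbeats 1000000

open MeasureTheory
open scoped ENNReal NNReal

/-- One-dimensional Laguerre heat kernel of Hermite type `G^H_{α,t}(x,y)`. -/
noncomputable def lagHeatH (α t x y : ℝ) : ℝ :=
  (x * y) ^ (α + 1/2) * Real.sinh (2 * t) ^ (-1 - α) *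
    ∫ s in (-1:ℝ)..1,
      Real.exp (-(1/2) * (Real.cosh (2 * t) / Real.sinh (2 * t)) * (x ^ 2 + y ^ 2)
          - x * y * s / Real.sinh (2 * t)) *
        ((1 - s ^ 2) ^ (α - 1/2) / (2 ^ α * Real.sqrt Real.pi * Real.Gamma (α + 1/2)))

/-- Laguerre heat kernel of convolution type `G_{α,t}(x,y) = (xy)^{−α−1/2} G^H_{α,t}(x,y)`. -/
noncomputable def lagHeatC (α t x y : ℝ) : ℝ :=
  (x * y) ^ (-α - 1/2) * lagHeatH α t x y

/-- Meda's change of variable `t(ξ) = (1/2) log((1+ξ)/(1−ξ))`, `ξ ∈ (0,1)`. -/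
noncomputable def meda (ξ : ℝ) : ℝ := (1/2) * Real.log ((1 + ξ) / (1 - ξ))

/-- for `α > −1/2`, `a ≥ 1` there is `C = C(α)` (independent of `j`) with
`G_{α+aj,t(ξ)}(x,y) ≤ C ((1−ξ²)/ξ)^{1/2} (xy)^{−aj−α−1/2}` for all `j ≥ 1`, `ξ ∈ (0,1)`,
`x, y > 0`. -/
theorem stmt16 (α a : ℝ) (hα : -(1/2) < α) (ha : 1 ≤ a) :
    ∃ C : ℝ, 0 < C ∧ ∀ j : ℕ, 1 ≤ j → ∀ ξ ∈ Set.Ioo (0:ℝ) 1, ∀ x y : ℝ, 0 < x → 0 < y →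
      lagHeatC (α + a * (j:ℝ)) (meda ξ) x y ≤
        C * ((1 - ξ ^ 2) / ξ) ^ ((1:ℝ)/2) * (x * y) ^ (-(a * (j:ℝ)) - α - 1/2) := by
  have hπ : (0:ℝ) < Real.sqrt Real.pi := Real.sqrt_pos.mpr Real.pi_pos
  refine ⟨1 / (2 * Real.sqrt Real.pi), by positivity, ?_⟩
  intro j hj ξ hξ x y hx hy
  obtain ⟨hξ0, hξ1⟩ := hξ
  have hj1 : (1:ℝ) ≤ (j:ℝ) := by exact_mod_cast hj
  set β : ℝ := α + a * (j:ℝ) with hβdef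
  have hβ : (1/2:ℝ) < β := by nlinarith
  have hp : (0:ℝ) < β - 1/2 := by linarith
  have hΓ : (0:ℝ) < Real.Gamma (β + 1/2) := Real.Gamma_pos_of_pos (by linarith)
  have h2β : (0:ℝ) < (2:ℝ) ^ β := Real.rpow_pos_of_pos two_pos β
  set D : ℝ := 2 ^ β * Real.sqrt Real.pi * Real.Gamma (β + 1/2) with hDdef
  have hD : (0:ℝ) < D := by rw [hDdef]; positivity
  -- sinh under Meda's change of variable
  have hξ2 : (0:ℝ) < 1 - ξ ^ 2 := by nlinarith
  have hξ1' : (0:ℝ) < 1 - ξ := by linarith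
  have hr : (0:ℝ) < (1 + ξ) / (1 - ξ) := by positivity
  have h2t : 2 * meda ξ = Real.log ((1 + ξ) / (1 - ξ)) := by
    unfold meda; ring
  have hS : Real.sinh (2 * meda ξ) = 2 * ξ / (1 - ξ ^ 2) := by
    rw [h2t, Real.sinh_log hr, inv_div]
    field_simp
    ring
  set S : ℝ := Real.sinh (2 * meda ξ) with hSdef
  have hSpos : (0:ℝ) < S := by rw [hS]; positivity
  have hxy : (0:ℝ) < x * y := mul_pos hx hy
  set c : ℝ := x * y / S with hc
  have hcpos : (0:ℝ) < c := by rw [hc]; positivity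
  -- pointwise bound on the integrand
  have hcoshS : (1:ℝ) ≤ Real.cosh (2 * meda ξ) := Real.one_le_cosh _
  have hexpbound : ∀ s ∈ Set.Icc (-1:ℝ) 1,
      Real.exp (-(1/2) * (Real.cosh (2 * meda ξ) / S) * (x ^ 2 + y ^ 2) - x * y * s / S) *
          ((1 - s ^ 2) ^ (β - 1/2) / D) ≤
        Real.exp (-(c * (1 + s))) * (1 + s) ^ (β - 1/2) * (2 ^ (β - 1/2) / D) := by
    intro s hs
    obtain ⟨hs1, hs2⟩ := hs
    have h1s : (0:ℝ) ≤ 1 + s := by linarith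
    have h1s' : (0:ℝ) ≤ 1 - s := by linarith
    have h1s2 : (0:ℝ) ≤ 1 - s ^ 2 := by nlinarith
    have hE : -(1/2) * (Real.cosh (2 * meda ξ) / S) * (x ^ 2 + y ^ 2) - x * y * s / S ≤
        -(c * (1 + s)) := by
      have e1 : -(1/2) * (Real.cosh (2 * meda ξ) / S) * (x ^ 2 + y ^ 2) - x * y * s / S =
          (-(1/2) * Real.cosh (2 * meda ξ) * (x ^ 2 + y ^ 2) - x * y * s) / S := by
        field_simp
      have e2 : -(c * (1 + s)) = (-(x * y * (1 + s))) / S := by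
        rw [hc]; field_simp
      rw [e1, e2]
      gcongr
      nlinarith [sq_nonneg (x - y),
        mul_nonneg (sub_nonneg.mpr hcoshS) (by positivity : (0:ℝ) ≤ x ^ 2 + y ^ 2)]
    have hrp : (1 - s ^ 2) ^ (β - 1/2) ≤ (1 + s) ^ (β - 1/2) * 2 ^ (β - 1/2) := by
      have hfact : (1 - s ^ 2 : ℝ) = (1 + s) * (1 - s) := by ring
      rw [hfact, Real.mul_rpow h1s h1s']
      gcongr
      linarith
    calc Real.exp (-(1/2) * (Real.cosh (2 * meda ξ) / S) * (x ^ 2 + y ^ 2) - x * y * s / S) *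
          ((1 - s ^ 2) ^ (β - 1/2) / D)
        ≤ Real.exp (-(c * (1 + s))) * (((1 + s) ^ (β - 1/2) * 2 ^ (β - 1/2)) / D) := by
          apply mul_le_mul (Real.exp_le_exp.mpr hE) _ _ (Real.exp_nonneg _)
          · gcongr
          · exact div_nonneg (Real.rpow_nonneg h1s2 _) hD.le
      _ = Real.exp (-(c * (1 + s))) * (1 + s) ^ (β - 1/2) * (2 ^ (β - 1/2) / D) := by ring
  -- integrability via continuity
  have hcont1 : Continuous fun s : ℝ =>
      Real.exp (-(1/2) * (Real.cosh (2 * meda ξ) / S) * (x ^ 2 + y ^ 2) - x * y * s / S) *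
        ((1 - s ^ 2) ^ (β - 1/2) / D) := by
    apply Continuous.mul
    · apply Real.continuous_exp.comp; fun_prop
    · apply Continuous.div_const
      exact (Real.continuous_rpow_const hp.le).comp (by fun_prop)
  have hcont2 : Continuous fun s : ℝ =>
      Real.exp (-(c * (1 + s))) * (1 + s) ^ (β - 1/2) * (2 ^ (β - 1/2) / D) := by
    apply Continuous.mul _ continuous_const
    apply Continuous.mul
    · apply Real.continuous_exp.comp; fun_prop
    · exact (Real.continuous_rpow_const hp.le).comp (by fun_prop)
  -- the interval integral bound
  have hI : (∫ s in (-1:ℝ)..1,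
      Real.exp (-(1/2) * (Real.cosh (2 * meda ξ) / S) * (x ^ 2 + y ^ 2) - x * y * s / S) *
        ((1 - s ^ 2) ^ (β - 1/2) / D)) ≤
      (∫ s in (-1:ℝ)..1, Real.exp (-(c * (1 + s))) * (1 + s) ^ (β - 1/2)) *
        (2 ^ (β - 1/2) / D) := by
    rw [← intervalIntegral.integral_mul_const]
    exact intervalIntegral.integral_mono_on (by norm_num)
      (hcont1.intervalIntegrable _ _) (hcont2.intervalIntegrable _ _) hexpbound
  -- change of variables and comparison with the Gamma integral
  have hFint : IntegrableOn (fun u : ℝ => u ^ (β - 1/2) * Real.exp (-c * u))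
      (Set.Ioi (0:ℝ)) := by
    have h := integrableOn_rpow_mul_exp_neg_mul_rpow
      (p := (1:ℝ)) (s := β - 1/2) (b := c) (by linarith) one_pos hcpos
    simpa only [Real.rpow_one] using h
  have hFval : (∫ u in Set.Ioi (0:ℝ), u ^ (β - 1/2) * Real.exp (-c * u)) =
      c ^ (-(β + 1/2)) * Real.Gamma (β + 1/2) := by
    have h := integral_rpow_mul_exp_neg_mul_rpow
      (p := (1:ℝ)) (q := β - 1/2) (b := c) one_pos (by linarith) hcpos
    simp only [Real.rpow_one, div_one] at h
    rw [show β - 1/2 + 1 = β + 1/2 from by ring] at h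
    rw [h, mul_one]
  have hJ : (∫ s in (-1:ℝ)..1, Real.exp (-(c * (1 + s))) * (1 + s) ^ (β - 1/2)) ≤
      c ^ (-(β + 1/2)) * Real.Gamma (β + 1/2) := by
    have h1 : (∫ s in (-1:ℝ)..1, Real.exp (-(c * (1 + s))) * (1 + s) ^ (β - 1/2)) =
        ∫ u in (0:ℝ)..2, u ^ (β - 1/2) * Real.exp (-c * u) := by
      have h := intervalIntegral.integral_comp_add_right
        (a := (-1:ℝ)) (b := 1) (fun u => u ^ (β - 1/2) * Real.exp (-c * u)) 1
      rw [show (-1:ℝ) + 1 = 0 by norm_num, show (1:ℝ) + 1 = 2 by norm_num] at h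
      rw [← h]
      congr 1
      ext s
      rw [add_comm s 1, mul_comm, neg_mul]
    rw [h1, intervalIntegral.integral_of_le (by norm_num), ← hFval]
    apply setIntegral_mono_set hFint
    · filter_upwards [ae_restrict_mem measurableSet_Ioi] with u hu
      have hu0 : (0:ℝ) < u := hu
      positivity
    · exact (Set.Ioc_subset_Ioi_self).eventuallyLE
  -- assemble
  have hmain : lagHeatC β (meda ξ) x y ≤
      ((x * y) ^ (-β - 1/2) * ((x * y) ^ (β + 1/2) * S ^ (-1 - β))) *
        (c ^ (-(β + 1/2)) * Real.Gamma (β + 1/2) * (2 ^ (β - 1/2) / D)) := by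
    unfold lagHeatC lagHeatH
    rw [← hSdef, ← hDdef]
    have hIle : (∫ s in (-1:ℝ)..1,
        Real.exp (-(1/2) * (Real.cosh (2 * meda ξ) / S) * (x ^ 2 + y ^ 2) - x * y * s / S) *
          ((1 - s ^ 2) ^ (β - 1/2) / D)) ≤
        c ^ (-(β + 1/2)) * Real.Gamma (β + 1/2) * (2 ^ (β - 1/2) / D) :=
      hI.trans (by
        apply mul_le_mul_of_nonneg_right hJ
        positivity)
    have hA : (0:ℝ) ≤ (x * y) ^ (-β - 1/2) * ((x * y) ^ (β + 1/2) * S ^ (-1 - β)) := by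
      positivity
    calc (x * y) ^ (-β - 1/2) * ((x * y) ^ (β + 1/2) * S ^ (-1 - β) *
          ∫ s in (-1:ℝ)..1,
            Real.exp (-(1/2) * (Real.cosh (2 * meda ξ) / S) * (x ^ 2 + y ^ 2)
              - x * y * s / S) * ((1 - s ^ 2) ^ (β - 1/2) / D))
        = ((x * y) ^ (-β - 1/2) * ((x * y) ^ (β + 1/2) * S ^ (-1 - β))) *
          (∫ s in (-1:ℝ)..1,
            Real.exp (-(1/2) * (Real.cosh (2 * meda ξ) / S) * (x ^ 2 + y ^ 2)
              - x * y * s / S) * ((1 - s ^ 2) ^ (β - 1/2) / D)) := by ring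
      _ ≤ _ := mul_le_mul_of_nonneg_left hIle hA
  -- identify the right-hand side
  have e1 : (x * y) ^ (-β - 1/2) * (x * y) ^ (β + 1/2) = 1 := by
    rw [← Real.rpow_add hxy]; norm_num
  have e2 : c ^ (-(β + 1/2)) = (x * y) ^ (-(β + 1/2)) * S ^ (β + 1/2) := by
    rw [hc, Real.div_rpow hxy.le hSpos.le, div_eq_mul_inv, ← Real.rpow_neg hSpos.le, neg_neg]
  have e3 : S ^ (-1 - β) * S ^ (β + 1/2) = S ^ (-(1:ℝ)/2) := by
    rw [← Real.rpow_add hSpos]; congr 1; ring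
  have e4 : S ^ (-(1:ℝ)/2) = ((1 - ξ ^ 2) / ξ) ^ ((1:ℝ)/2) * 2 ^ (-(1:ℝ)/2) := by
    have h1 : S ^ (-(1:ℝ)/2) = (S⁻¹) ^ ((1:ℝ)/2) := by
      rw [Real.inv_rpow hSpos.le, ← Real.rpow_neg hSpos.le]
      norm_num
    have h2 : S⁻¹ = ((1 - ξ ^ 2) / ξ) * (2:ℝ)⁻¹ := by
      rw [hS]
      field_simp
      try ring
      try exact Or.inl trivial
    rw [h1, h2, Real.mul_rpow (by positivity) (by norm_num),
      Real.inv_rpow (by norm_num : (0:ℝ) ≤ 2), ← Real.rpow_neg (by norm_num : (0:ℝ) ≤ 2)]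
    norm_num
  have e5 : Real.Gamma (β + 1/2) * (2 ^ (β - 1/2) / D) = 2 ^ (-(1:ℝ)/2) / Real.sqrt Real.pi := by
    rw [show β - 1/2 = β + (-(1:ℝ)/2) by ring, Real.rpow_add two_pos, hDdef]
    field_simp
  have e6 : (x * y) ^ (-(β + 1/2)) = (x * y) ^ (-(a * (j:ℝ)) - α - 1/2) := by
    rw [show -(β + 1/2) = -(a * (j:ℝ)) - α - 1/2 by rw [hβdef]; ring]
  have h7 : (2:ℝ) ^ (-(1:ℝ)/2) * 2 ^ (-(1:ℝ)/2) = 1/2 := by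
    rw [← Real.rpow_add two_pos, show (-(1:ℝ)/2 + -(1:ℝ)/2) = -1 by ring, Real.rpow_neg_one]
    norm_num
  have hrhs : ((x * y) ^ (-β - 1/2) * ((x * y) ^ (β + 1/2) * S ^ (-1 - β))) *
      (c ^ (-(β + 1/2)) * Real.Gamma (β + 1/2) * (2 ^ (β - 1/2) / D)) =
      1 / (2 * Real.sqrt Real.pi) * ((1 - ξ ^ 2) / ξ) ^ ((1:ℝ)/2) *
        (x * y) ^ (-(a * (j:ℝ)) - α - 1/2) := by
    calc ((x * y) ^ (-β - 1/2) * ((x * y) ^ (β + 1/2) * S ^ (-1 - β))) *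
        (c ^ (-(β + 1/2)) * Real.Gamma (β + 1/2) * (2 ^ (β - 1/2) / D))
        = ((x * y) ^ (-β - 1/2) * (x * y) ^ (β + 1/2)) * (S ^ (-1 - β) * S ^ (β + 1/2)) *
          (Real.Gamma (β + 1/2) * (2 ^ (β - 1/2) / D)) * (x * y) ^ (-(β + 1/2)) := by
          rw [e2]; ring
      _ = 1 * S ^ (-(1:ℝ)/2) * (2 ^ (-(1:ℝ)/2) / Real.sqrt Real.pi) *
          (x * y) ^ (-(a * (j:ℝ)) - α - 1/2) := by rw [e1, e3, e5, e6]
      _ = (2 ^ (-(1:ℝ)/2) * 2 ^ (-(1:ℝ)/2)) / Real.sqrt Real.pi *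
          (((1 - ξ ^ 2) / ξ) ^ ((1:ℝ)/2) * (x * y) ^ (-(a * (j:ℝ)) - α - 1/2)) := by
          rw [e4]; ring
      _ = _ := by rw [h7]; ring
  exact hmain.trans (le_of_eq hrhs)
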